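/- Let M be a paving matroid of rank k on n elements, let λ_h be the number of hyperplanes of size h, and h_max the size of the largest hyperplane. Then ∑_{h≥k} λ_h·(h choose k) ≤ ((h_max − k + 1)/(n − k + 1))·(n choose k). -/

import Mathlib

set_option maxRecDepth 8000

open Set

variable {α : Type*}

/-- The (natural-number valued) rank of a set `X` in a matroid `M`:
the maximum cardinality of an independent subset of `X`. -/
noncomputable def Matroid.nrk (M : Matroid α) (X : Set α) : ℕ :=
  sSup (Set.ncard '' {I | M.Indep I ∧ I ⊆ X})

/-- The rank of the matroid `M`. -/
noncomputable def Matroid.nRank (M : Matroid α) : ℕ := M.nrk M.E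

/-- The cusp of a subset `A` in a matroid `M` of rank `k`:
all `k`-element subsets `S` of the ground set with `|S ∩ A| ≥ rk A + 1`. -/
def Matroid.cusp (M : Matroid α) (A : Set α) : Set (Set α) :=
  {S | S ⊆ M.E ∧ S.ncard = M.nRank ∧ M.nrk A + 1 ≤ (S ∩ A).ncard}

/-- A subset `A` of a matroid `M` is stressed if both the restriction `M | A`
and the contraction `M / A` are uniform matroids; for a finite matroid this is
equivalent to the rank functions of the restriction and of the contraction being
those of uniform matroids. -/
def Matroid.StressedSubset (M : Matroid α) (A : Set α) : Prop :=
  (∀ S ⊆ A, M.nrk S = min S.ncard (M.nrk A)) ∧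
  (∀ Y ⊆ M.E \ A, M.nrk (A ∪ Y) = M.nrk A + min Y.ncard (M.nRank - M.nrk A))

/-- A hyperplane of `M`: a flat of rank `rk(M) − 1`. -/
def Matroid.Hyp (M : Matroid α) (H : Set α) : Prop :=
  M.IsFlat H ∧ M.nrk H + 1 = M.nRank

section Aux

lemma le_nrk [Finite α] {M : Matroid α} {I X : Set α} (hI : M.Indep I) (hIX : I ⊆ X) :
    I.ncard ≤ M.nrk X :=
  le_csSup ((Set.toFinite _).bddAbove) ⟨I, ⟨hI, hIX⟩, rfl⟩

lemma nrk_le {M : Matroid α} {X : Set α} {m : ℕ}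
    (h : ∀ I, M.Indep I → I ⊆ X → I.ncard ≤ m) : M.nrk X ≤ m :=
  csSup_le ⟨0, ∅, ⟨M.empty_indep, empty_subset X⟩, by simp⟩
    (by rintro x ⟨I, ⟨hI, hIX⟩, rfl⟩; exact h I hI hIX)

lemma flat_closure (M : Matroid α) (X : Set α) : M.IsFlat (M.closure X) := by
  rw [Matroid.closure_def, sInter_eq_iInter]
  have : Nonempty {F // F ∈ {F | M.IsFlat F ∧ X ∩ M.E ⊆ F}} :=
    ⟨⟨M.E, M.ground_isFlat, inter_subset_right⟩⟩
  exact Matroid.IsFlat.iInter (fun F ↦ F.2.1)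

lemma nrk_closure_indep [Finite α] {M : Matroid α} {I : Set α} (hI : M.Indep I) :
    M.nrk (M.closure I) = I.ncard := by
  refine le_antisymm (nrk_le fun J hJ hJX => ?_)
    (le_nrk hI (M.subset_closure I hI.subset_ground))
  obtain ⟨J', hJ', hJJ'⟩ := hJ.subset_isBasis_of_subset hJX (M.closure_subset_ground I)
  have h1 : J'.encard = I.encard := hJ'.encard_eq_encard hI.isBasis_closure
  have h2 : J'.ncard = I.ncard := by rw [Set.ncard_def, h1, ← Set.ncard_def]
  exact h2 ▸ Set.ncard_le_ncard hJJ' J'.toFinite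

variable {M : Matroid α} {n k hm : ℕ}

lemma indep_small (hE : M.E = Set.univ) (hpav : ∀ D, M.Dep D → k ≤ D.ncard)
    {I : Set α} (hcard : I.ncard < k) : M.Indep I := by
  by_contra h
  have : M.Dep I := ⟨h, by rw [hE]; exact subset_univ I⟩
  exact absurd (hpav I this) (by omega)

lemma dep_of_subset_hyp [Finite α] (hE : M.E = Set.univ) (hk : M.nRank = k)
    {H S : Set α} (hH : M.Hyp H) (hSH : S ⊆ H) (hS : S.ncard = k) :
    M.Dep S := by
  refine ⟨fun hind => ?_, by rw [hE]; exact subset_univ S⟩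
  have := le_nrk hind hSH
  have := hH.2
  omega

lemma hyp_eq_closure [Finite α] (hE : M.E = Set.univ) (hk : M.nRank = k)
    {H I : Set α} (hH : M.Hyp H) (hIH : I ⊆ H) (hI : M.Indep I)
    (hIc : I.ncard = k - 1) (hk1 : 1 ≤ k) : H = M.closure I := by
  refine subset_antisymm (fun x hx => ?_)
    ((M.closure_subset_closure hIH).trans_eq hH.1.closure)
  rw [hI.mem_closure_iff]
  by_cases hxI : x ∈ I
  · exact Or.inr hxI
  refine Or.inl (dep_of_subset_hyp hE hk hH (insert_subset hx hIH) ?_)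
  rw [Set.ncard_insert_of_notMem hxI I.toFinite]
  omega

lemma closure_hyp [Finite α] (hk : M.nRank = k)
    {I : Set α} (hI : M.Indep I) (hIc : I.ncard = k - 1) (hk1 : 1 ≤ k) :
    M.Hyp (M.closure I) := by
  refine ⟨flat_closure M I, ?_⟩
  rw [nrk_closure_indep hI, hIc, hk]
  omega

open Finset in
lemma double_count [Fintype α] [DecidableEq α] (k : ℕ) (hk : 1 ≤ k)
    (𝒟 : Finset (Finset α)) (h𝒟 : ∀ S ∈ 𝒟, S.card = k) :
    ∑ I ∈ Finset.univ.powersetCard (k-1), (𝒟.filter (fun S => I ⊆ S)).card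
      = 𝒟.card * k := by
  have key : ∀ S ∈ 𝒟, ((Finset.univ.powersetCard (k-1)).filter (fun I => I ⊆ S)).card = k := by
    intro S hS
    have h0 : (Finset.univ.powersetCard (k-1)).filter (fun I => I ⊆ S)
        = S.powersetCard (k-1) := by
      ext I
      simp [Finset.mem_powersetCard, and_comm]
    rw [h0, Finset.card_powersetCard, h𝒟 S hS]
    have h2 : k - (k-1) = 1 := by omega
    rw [← Nat.choose_symm (Nat.sub_le k 1), h2, Nat.choose_one_right]
  calc ∑ I ∈ Finset.univ.powersetCard (k-1), (𝒟.filter (fun S => I ⊆ S)).card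
      = ∑ I ∈ Finset.univ.powersetCard (k-1), ∑ S ∈ 𝒟, if I ⊆ S then 1 else 0 := by
        simp only [Finset.card_filter]
    _ = ∑ S ∈ 𝒟, ∑ I ∈ Finset.univ.powersetCard (k-1), if I ⊆ S then 1 else 0 :=
        Finset.sum_comm
    _ = ∑ S ∈ 𝒟, ((Finset.univ.powersetCard (k-1)).filter (fun I => I ⊆ S)).card := by
        simp only [Finset.card_filter]
    _ = ∑ S ∈ 𝒟, k := Finset.sum_congr rfl key
    _ = 𝒟.card * k := by rw [Finset.sum_const, smul_eq_mul]

end Aux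

theorem paving_hyperplane_bound [Fintype α] (M : Matroid α) (hE : M.E = Set.univ)
    {n k hm : ℕ} (hn : Fintype.card α = n) (hk : M.nRank = k)
    (hpav : ∀ D, M.Dep D → k ≤ D.ncard)
    (hmax : IsGreatest {m | ∃ H, M.Hyp H ∧ H.ncard = m} hm) :
    (∑ H ∈ (Set.toFinite {H : Set α | M.Hyp H}).toFinset, (H.ncard).choose k) * (n - k + 1)
      ≤ (hm - k + 1) * n.choose k := by
  classical
  set HF := (Set.toFinite {H : Set α | M.Hyp H}).toFinset with hHF
  have hmemHF : ∀ {H : Set α}, H ∈ HF ↔ M.Hyp H := fun {H} => Set.Finite.mem_toFinset _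
  rcases Nat.eq_zero_or_pos k with hk0 | hk1
  · have hempty : HF = ∅ := Finset.eq_empty_of_forall_notMem (fun H hH => by
      have h1 := (hmemHF.mp hH).2
      rw [hk, hk0] at h1
      omega)
    rw [hempty]
    simp
  have hkn : k ≤ n := by
    rw [← hk, ← hn]
    refine nrk_le fun I hI hIE => ?_
    calc I.ncard ≤ (Set.univ : Set α).ncard :=
          Set.ncard_le_ncard (subset_univ I) (Set.toFinite _)
      _ = Fintype.card α := by rw [Set.ncard_univ]; exact Nat.card_eq_fintype_card
  set 𝒟 : Finset (Finset α) :=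
    (Finset.univ.powersetCard k).filter (fun S => M.Dep ↑S) with h𝒟
  have hDcard : ∀ S ∈ 𝒟, S.card = k := by
    intro S hS
    exact (Finset.mem_powersetCard.mp (Finset.mem_filter.mp hS).1).2
  -- Step 1 : the k-subsets of distinct hyperplanes are distinct dependent k-sets
  have step1 : (∑ H ∈ HF, (H.ncard).choose k) ≤ 𝒟.card := by
    set f : Set α → Finset (Finset α) := fun H => H.toFinset.powersetCard k with hf
    have hcoe : ∀ (H : Set α) (S : Finset α), S ∈ f H → (↑S : Set α) ⊆ H ∧ S.card = k := by
      intro H S hS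
      rw [hf, Finset.mem_powersetCard] at hS
      refine ⟨?_, hS.2⟩
      rw [← Set.coe_toFinset H]
      exact Finset.coe_subset.mpr hS.1
    have hsub : ∀ H ∈ HF, f H ⊆ 𝒟 := by
      intro H hH S hS
      obtain ⟨hSH, hSk⟩ := hcoe H S hS
      rw [h𝒟, Finset.mem_filter, Finset.mem_powersetCard]
      refine ⟨⟨Finset.subset_univ S, hSk⟩, ?_⟩
      exact dep_of_subset_hyp hE hk (hmemHF.mp hH) hSH
        (by rw [Set.ncard_coe_finset]; exact hSk)
    have hdisj : ∀ H₁ ∈ HF, ∀ H₂ ∈ HF, H₁ ≠ H₂ → Disjoint (f H₁) (f H₂) := by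
      intro H₁ hH₁ H₂ hH₂ hne
      rw [Finset.disjoint_left]
      intro S hS1 hS2
      obtain ⟨hSH1, hSk⟩ := hcoe H₁ S hS1
      obtain ⟨hSH2, -⟩ := hcoe H₂ S hS2
      obtain ⟨I, hIS, hIc⟩ := Finset.exists_subset_card_eq (show k - 1 ≤ S.card by omega)
      have hIcn : (↑I : Set α).ncard = k - 1 := by rw [Set.ncard_coe_finset, hIc]
      have hIind : M.Indep ↑I := indep_small hE hpav (by omega)
      have hIcoeS : (↑I : Set α) ⊆ ↑S := Finset.coe_subset.mpr hIS
      have e1 : H₁ = M.closure ↑I :=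
        hyp_eq_closure hE hk (hmemHF.mp hH₁) (hIcoeS.trans hSH1) hIind hIcn hk1
      have e2 : H₂ = M.closure ↑I :=
        hyp_eq_closure hE hk (hmemHF.mp hH₂) (hIcoeS.trans hSH2) hIind hIcn hk1
      exact hne (e1.trans e2.symm)
    calc ∑ H ∈ HF, (H.ncard).choose k = ∑ H ∈ HF, (f H).card := by
          refine Finset.sum_congr rfl fun H _ => ?_
          rw [hf, Finset.card_powersetCard, Set.ncard_eq_toFinset_card']
      _ = (HF.biUnion f).card := (Finset.card_biUnion hdisj).symm
      _ ≤ 𝒟.card := Finset.card_le_card (Finset.biUnion_subset.mpr hsub)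
  -- Step 2 : each (k-1)-set extends to at most hm - k + 1 dependent k-sets
  have step2 : 𝒟.card * k ≤ (Nat.choose n (k-1)) * (hm - k + 1) := by
    have bound : ∀ I ∈ Finset.univ.powersetCard (k-1),
        (𝒟.filter (fun S => I ⊆ S)).card ≤ hm - k + 1 := by
      intro I hI'
      have hIcard : I.card = k - 1 := (Finset.mem_powersetCard.mp hI').2
      have hIcn : (↑I : Set α).ncard = k - 1 := by rw [Set.ncard_coe_finset, hIcard]
      have hIind : M.Indep ↑I := indep_small hE hpav (by omega)
      have hhyp : M.Hyp (M.closure ↑I) := closure_hyp hk hIind hIcn hk1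
      have hclhm : (M.closure (↑I : Set α)).ncard ≤ hm := hmax.2 ⟨_, hhyp, rfl⟩
      set T := (M.closure (↑I : Set α) \ ↑I).toFinset with hT
      have hsub2 : 𝒟.filter (fun S => I ⊆ S) ⊆ T.image (fun x => insert x I) := by
        intro S hS
        rw [Finset.mem_filter] at hS
        obtain ⟨hSD, hIS⟩ := hS
        have hSk := hDcard S hSD
        have hdep : M.Dep ↑S := (Finset.mem_filter.mp hSD).2
        have hcard1 : (S \ I).card = 1 := by rw [Finset.card_sdiff_of_subset hIS]; omega
        obtain ⟨x, hx⟩ := Finset.card_eq_one.mp hcard1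
        have hxSI : x ∈ S \ I := hx ▸ Finset.mem_singleton_self x
        have hxI : x ∉ I := (Finset.mem_sdiff.mp hxSI).2
        have hSeq : S = insert x I := by
          rw [← Finset.sdiff_union_of_subset hIS, hx]
          ext a
          simp [or_comm]
        have hxcl : x ∈ M.closure ↑I := by
          rw [hIind.mem_closure_iff_of_notMem (by simpa using hxI)]
          rw [hSeq, Finset.coe_insert] at hdep
          exact hdep
        exact Finset.mem_image.mpr ⟨x, by rw [Set.mem_toFinset]; exact ⟨hxcl, by simpa using hxI⟩,
          hSeq.symm⟩
      calc (𝒟.filter (fun S => I ⊆ S)).card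
          ≤ (T.image (fun x => insert x I)).card := Finset.card_le_card hsub2
        _ ≤ T.card := Finset.card_image_le
        _ = (M.closure (↑I : Set α) \ ↑I).ncard := (Set.ncard_eq_toFinset_card' _).symm
        _ ≤ hm - k + 1 := by
            rw [Set.ncard_diff (M.subset_closure ↑I (by rw [hE]; exact subset_univ _))]
            omega
    calc 𝒟.card * k
        = ∑ I ∈ Finset.univ.powersetCard (k-1), (𝒟.filter (fun S => I ⊆ S)).card :=
          (double_count k hk1 𝒟 hDcard).symm
      _ ≤ ∑ _I ∈ Finset.univ.powersetCard (k-1), (hm - k + 1) :=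
          Finset.sum_le_sum bound
      _ = (Nat.choose n (k-1)) * (hm - k + 1) := by
          rw [Finset.sum_const, smul_eq_mul, Finset.card_powersetCard, Finset.card_univ, hn]
  -- arithmetic
  have h3 : Nat.choose n k * k = Nat.choose n (k-1) * (n - k + 1) := by
    have h := Nat.choose_succ_right_eq n (k-1)
    have hk' : k - 1 + 1 = k := by omega
    rw [hk'] at h
    rw [h]
    congr 1
    omega
  set A := ∑ H ∈ HF, (H.ncard).choose k with hA
  have hmul : A * (n - k + 1) * k ≤ (hm - k + 1) * n.choose k * k := by
    calc A * (n - k + 1) * k ≤ 𝒟.card * (n - k + 1) * k := by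
          exact Nat.mul_le_mul_right _ (Nat.mul_le_mul_right _ step1)
      _ = (𝒟.card * k) * (n - k + 1) := by ring
      _ ≤ ((Nat.choose n (k-1)) * (hm - k + 1)) * (n - k + 1) :=
          Nat.mul_le_mul_right _ step2
      _ = (hm - k + 1) * (Nat.choose n (k-1) * (n - k + 1)) := by ring
      _ = (hm - k + 1) * (Nat.choose n k * k) := by rw [h3]
      _ = (hm - k + 1) * n.choose k * k := by ring
  exact Nat.le_of_mul_le_mul_right hmul hk1
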